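/- Let m ≥ 4 and let Π be a hyperplane of the Plücker projective space P(⋀^2 V) such that |Π ∩ G(2,V)| < e(2,m). Then |Π ∩ G(2,V)| ≤ e'(2,m) = [m 2]_q − q^{2(m−2)} − q^{2(m−2)−2}. -/

import Mathlib

open Module

/-- The Gaussian binomial coefficient `[m ℓ]_q`, as a rational number. -/
noncomputable def gaussBinom (q m l : ℕ) : ℚ :=
  ∏ i ∈ Finset.range l, ((q : ℚ) ^ (m - i) - 1) / ((q : ℚ) ^ (i + 1) - 1)

/-- `e(ℓ,m) = [m ℓ]_q − q^{ℓ(m−ℓ)}`. -/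
noncomputable def eG (q l m : ℕ) : ℚ :=
  gaussBinom q m l - (q : ℚ) ^ (l * (m - l))

/-- `e'(ℓ,m) = [m ℓ]_q − q^{ℓ(m−ℓ)} − q^{ℓ(m−ℓ)−2}`. -/
noncomputable def eG' (q l m : ℕ) : ℚ :=
  gaussBinom q m l - (q : ℚ) ^ (l * (m - l)) - (q : ℚ) ^ (l * (m - l) - 2)

variable (F : Type*) [Field F] (V : Type*) [AddCommGroup V] [Module F V]

/-- The wedge product `v₁ ∧ ⋯ ∧ vₙ` as an element of the `n`-th exterior power. -/
noncomputable def wedge (n : ℕ) (v : Fin n → V) : ⋀[F]^n V :=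
  ⟨ExteriorAlgebra.ιMulti F n v, ExteriorAlgebra.ιMulti_range F n (Set.mem_range_self v)⟩

/-- The product `w₁ ∧ ⋯ ∧ w_k ∧ x` for `x` in the `l`-th exterior power, landing in the
`n`-th exterior power, where `k + l = n`. -/
noncomputable def mulWedge (k l n : ℕ) (h : k + l = n) (w : Fin k → V) (x : ⋀[F]^l V) :
    ⋀[F]^n V :=
  ⟨ExteriorAlgebra.ιMulti F k w * (x : ExteriorAlgebra F V), by
    subst h
    have hmem : ExteriorAlgebra.ιMulti F k w * (x : ExteriorAlgebra F V) ∈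
        (LinearMap.range (ExteriorAlgebra.ι F : V →ₗ[F] ExteriorAlgebra F V)) ^ k *
          (LinearMap.range (ExteriorAlgebra.ι F : V →ₗ[F] ExteriorAlgebra F V)) ^ l :=
      Submodule.mul_mem_mul (ExteriorAlgebra.ιMulti_range F k (Set.mem_range_self w)) x.2
    rw [← pow_add] at hmem
    exact hmem⟩

/-- An `ℓ`-dimensional subspace `L` of `V` lies on the hyperplane of the Plücker projective
space determined by the nonzero functional `φ : ⋀[F]^ℓ V →ₗ[F] F` if
`φ (ω₁ ∧ ⋯ ∧ ω_ℓ) = 0` for some (equivalently, every) basis `ω₁, …, ω_ℓ` of `L`. -/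
def LiesOn (l : ℕ) (φ : ⋀[F]^l V →ₗ[F] F) (L : Submodule F V) : Prop :=
  ∃ ω : Fin l → V, (∀ i, ω i ∈ L) ∧ LinearIndependent F ω ∧
    Submodule.span F (Set.range ω) = L ∧ φ (wedge F V l ω) = 0

/-- The hyperplane determined by `φ : ⋀[F]^ℓ V →ₗ[F] F` is decomposable if there exist vectors
`w₁, …, w_{m−ℓ} ∈ V` and a nonzero linear functional `ψ : ⋀[F]^m V →ₗ[F] F` such that
`φ x = ψ (w₁ ∧ ⋯ ∧ w_{m−ℓ} ∧ x)` for all `x ∈ ⋀[F]^ℓ V`. -/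
def IsDecomposable (m l : ℕ) (h : l ≤ m) (φ : ⋀[F]^l V →ₗ[F] F) : Prop :=
  ∃ (w : Fin (m - l) → V) (ψ : ⋀[F]^m V →ₗ[F] F), ψ ≠ 0 ∧
    ∀ x : ⋀[F]^l V, φ x = ψ (mulWedge F V (m - l) l m (Nat.sub_add_cancel h) w x)

set_option linter.unusedSectionVars false
set_option maxHeartbeats 1000000
section AuxBil
lemma wedge_coe (n : ℕ) (v : Fin n → V) :
    (wedge F V n v : ExteriorAlgebra F V) = ExteriorAlgebra.ιMulti F n v := rfl

lemma wedge2_coe (u v : V) :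
    (wedge F V 2 ![u, v] : ExteriorAlgebra F V)
      = ExteriorAlgebra.ι F u * ExteriorAlgebra.ι F v := by
  rw [wedge_coe, ExteriorAlgebra.ιMulti_apply]
  simp [List.ofFn_succ]

/-- The alternating bilinear form associated to `φ`. -/
noncomputable def bil (φ : ⋀[F]^2 V →ₗ[F] F) : V →ₗ[F] V →ₗ[F] F :=
  LinearMap.mk₂ F (fun u v => φ (wedge F V 2 ![u, v]))
    (fun u u' v => by
      show φ (wedge F V 2 ![u + u', v]) = _
      rw [← map_add]
      congr 1
      apply Subtype.ext
      simp [wedge2_coe, add_mul])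
    (fun a u v => by
      show φ (wedge F V 2 ![a • u, v]) = _
      rw [← map_smul]
      congr 1
      apply Subtype.ext
      simp [wedge2_coe, smul_mul_assoc])
    (fun u v v' => by
      show φ (wedge F V 2 ![u, v + v']) = _
      rw [← map_add]
      congr 1
      apply Subtype.ext
      simp [wedge2_coe, mul_add])
    (fun a u v => by
      show φ (wedge F V 2 ![u, a • v]) = _
      rw [← map_smul]
      congr 1
      apply Subtype.ext
      simp [wedge2_coe, mul_smul_comm])

lemma bil_apply (φ : ⋀[F]^2 V →ₗ[F] F) (u v : V) :
    bil F V φ u v = φ (wedge F V 2 ![u, v]) := rfl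

lemma bil_wedge (φ : ⋀[F]^2 V →ₗ[F] F) (ω : Fin 2 → V) :
    φ (wedge F V 2 ω) = bil F V φ (ω 0) (ω 1) := by
  rw [bil_apply]
  have h : ![ω 0, ω 1] = ω := by
    ext i
    fin_cases i <;> rfl
  rw [h]

lemma bil_alt (φ : ⋀[F]^2 V →ₗ[F] F) (u : V) : bil F V φ u u = 0 := by
  rw [bil_apply]
  have : wedge F V 2 ![u, u] = 0 := by
    apply Subtype.ext
    simp [wedge2_coe, ExteriorAlgebra.ι_sq_zero]
  rw [this, map_zero]

lemma bil_skew (φ : ⋀[F]^2 V →ₗ[F] F) (u v : V) : bil F V φ v u = - bil F V φ u v := by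
  have h := bil_alt F V φ (u + v)
  simp only [map_add, LinearMap.add_apply, bil_alt] at h
  linear_combination h


end AuxBil

section Alt
variable {K : Type*} [Field K] {M : Type*} [AddCommGroup M] [Module K M]

lemma skew (B : M →ₗ[K] M →ₗ[K] K) (halt : ∀ v, B v v = 0) (x y : M) :
    B y x = - B x y := by
  have h := halt (x + y)
  simp only [map_add, LinearMap.add_apply, halt] at h
  linear_combination h

lemma isotropic_span_pair (B : M →ₗ[K] M →ₗ[K] K) (halt : ∀ v, B v v = 0) {u v : M}
    (h : B u v = 0) :
    ∀ x ∈ Submodule.span K ({u, v} : Set M), ∀ y ∈ Submodule.span K ({u, v} : Set M),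
      B x y = 0 := by
  intro x hx y hy
  obtain ⟨a, b, rfl⟩ := Submodule.mem_span_pair.mp hx
  obtain ⟨c, d, rfl⟩ := Submodule.mem_span_pair.mp hy
  have h' : B v u = 0 := by rw [skew B halt, h, neg_zero]
  simp [map_add, map_smul, halt, h, h']

lemma range_fin2 {α : Type*} (ω : Fin 2 → α) : Set.range ω = {ω 0, ω 1} := by
  ext z
  simp [Fin.exists_fin_two, eq_comm]

end Alt

section Parity
variable {K : Type*} [Field K]

lemma skew' {M : Type*} [AddCommGroup M] [Module K M] (B : M →ₗ[K] M →ₗ[K] K)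
    (halt : ∀ v, B v v = 0) (x y : M) : B y x = - B x y := by
  have h := halt (x + y)
  simp only [map_add, LinearMap.add_apply, halt] at h
  linear_combination h

variable {M : Type*} [AddCommGroup M] [Module K M] [FiniteDimensional K M]
variable (B : M →ₗ[K] M →ₗ[K] K)

lemma corank_two (halt : ∀ v, B v v = 0) {u v : M} (huv : B u v ≠ 0) :
    finrank K (LinearMap.ker ((B u).prod (B v))) + 2 = finrank K M := by
  have hvu : B v u ≠ 0 := by rw [skew' B halt]; exact neg_ne_zero.mpr huv
  have hsurj : Function.Surjective ((B u).prod (B v)) := by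
    rintro ⟨a, b⟩
    refine ⟨(a / B u v) • v + (b / B v u) • u, ?_⟩
    have h1 : B u ((a / B u v) • v + (b / B v u) • u) = a := by
      simp only [map_add, map_smul, smul_eq_mul, halt]
      field_simp
      ring
    have h2 : B v ((a / B u v) • v + (b / B v u) • u) = b := by
      simp only [map_add, map_smul, smul_eq_mul, halt]
      field_simp
      ring
    exact Prod.ext h1 h2
  have h := LinearMap.finrank_range_add_finrank_ker ((B u).prod (B v))
  rw [LinearMap.range_eq_top.mpr hsurj, finrank_top, Module.finrank_prod,
    Module.finrank_self] at h
  omega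

lemma ker_restrict_eq (halt : ∀ v, B v v = 0) {u v : M} (huv : B u v ≠ 0) :
    (LinearMap.ker ((B.domRestrict₁₂ (LinearMap.ker ((B u).prod (B v)))
        (LinearMap.ker ((B u).prod (B v)))))).map
        (LinearMap.ker ((B u).prod (B v))).subtype = LinearMap.ker B := by
  set W := LinearMap.ker ((B u).prod (B v)) with hW
  have hmemW : ∀ x : M, x ∈ W ↔ B u x = 0 ∧ B v x = 0 := by
    intro x
    rw [hW, LinearMap.mem_ker, Prod.ext_iff]
    rfl
  have hvu : B v u ≠ 0 := by rw [skew' B halt]; exact neg_ne_zero.mpr huv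
  apply le_antisymm
  · rintro _ ⟨⟨w, hwW⟩, hw, rfl⟩
    rw [SetLike.mem_coe] at hw
    rw [LinearMap.mem_ker] at hw ⊢
    show B w = 0
    ext x
    -- decompose x
    set x' := x - (B u x / B u v) • v - (B v x / B v u) • u with hx'
    have hx'W : x' ∈ W := by
      rw [hmemW]
      constructor
      · simp only [hx', map_sub, map_smul, smul_eq_mul, halt]
        field_simp
        ring
      · simp only [hx', map_sub, map_smul, smul_eq_mul, halt]
        field_simp
        ring
    have hwu : B w u = 0 := by
      rw [skew' B halt, ((hmemW w).mp hwW).1, neg_zero]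
    have hwv : B w v = 0 := by
      rw [skew' B halt, ((hmemW w).mp hwW).2, neg_zero]
    have hwx' : B w x' = 0 := by
      have := congrFun (congrArg (fun f => f.toFun) hw) ⟨x', hx'W⟩
      simpa [LinearMap.domRestrict₁₂_apply] using this
    have : x = x' + (B u x / B u v) • v + (B v x / B v u) • u := by rw [hx']; abel
    rw [LinearMap.zero_apply, this]
    simp only [map_add, map_smul, smul_eq_mul, hwx', hwu, hwv]
    ring
  · intro r hr
    rw [LinearMap.mem_ker] at hr
    have hrW : r ∈ W := by
      rw [hmemW]
      constructor
      · rw [skew' B halt, hr]; simp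
      · rw [skew' B halt, hr]; simp
    refine ⟨⟨r, hrW⟩, ?_, rfl⟩
    rw [SetLike.mem_coe, LinearMap.mem_ker]
    ext w
    simp [LinearMap.domRestrict₁₂_apply, hr]
end Parity

section Parity2
variable {K : Type*} [Field K]

theorem even_corank :
    ∀ (n : ℕ) (M : Type u) [AddCommGroup M] [Module K M] [FiniteDimensional K M]
      (_ : finrank K M ≤ n) (B : M →ₗ[K] M →ₗ[K] K) (_ : ∀ v, B v v = 0),
      Even (finrank K M - finrank K (LinearMap.ker B)) := by
  intro n
  induction n with
  | zero =>
    intro M _ _ _ hn B halt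
    by_cases hB : B = 0
    · subst hB
      rw [LinearMap.ker_zero, finrank_top, Nat.sub_self]
      exact Even.zero
    · obtain ⟨u, hu⟩ : ∃ u, B u ≠ 0 := by
        by_contra h
        push_neg at h
        exact hB (LinearMap.ext h)
      obtain ⟨v, huv⟩ : ∃ v, B u v ≠ 0 := by
        by_contra h
        push_neg at h
        exact hu (LinearMap.ext h)
      have := corank_two B halt huv
      omega
  | succ n ih =>
    intro M _ _ _ hn B halt
    by_cases hB : B = 0
    · subst hB
      rw [LinearMap.ker_zero, finrank_top, Nat.sub_self]
      exact Even.zero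
    · obtain ⟨u, hu⟩ : ∃ u, B u ≠ 0 := by
        by_contra h
        push_neg at h
        exact hB (LinearMap.ext h)
      obtain ⟨v, huv⟩ : ∃ v, B u v ≠ 0 := by
        by_contra h
        push_neg at h
        exact hu (LinearMap.ext h)
      set W := LinearMap.ker ((B u).prod (B v)) with hWdef
      have hW2 : finrank K W + 2 = finrank K M := corank_two B halt huv
      set B' := B.domRestrict₁₂ W W with hB'def
      have halt' : ∀ w : W, B' w w = 0 := fun w => halt w
      have hmap := ker_restrict_eq B halt huv
      have hkereq : finrank K (LinearMap.ker B') = finrank K (LinearMap.ker B) := by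
        rw [← hmap]
        exact (Submodule.equivMapOfInjective W.subtype (Submodule.injective_subtype W)
          (LinearMap.ker B')).finrank_eq
      have hkerle : finrank K (LinearMap.ker B) ≤ finrank K W := by
        rw [← hkereq]
        exact (LinearMap.ker B').finrank_le
      have hWn : finrank K W ≤ n := by omega
      obtain ⟨t, ht⟩ := ih W hWn B' halt'
      rw [hkereq] at ht
      exact ⟨t + 1, by omega⟩

end Parity2

section Count
variable {K : Type*} [Field K] [Fintype K] {M : Type*} [AddCommGroup M] [Module K M]
  [FiniteDimensional K M]

lemma card_submodule (W : Submodule K M) :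
    Nat.card W = Fintype.card K ^ finrank K W := by
  have : Finite M := Module.finite_of_finite K
  have : Fintype W := Fintype.ofFinite W
  rw [Nat.card_eq_fintype_card, card_eq_pow_finrank (K := K) (V := W)]

lemma card_diff (s t : Submodule K M) (h : s ≤ t) :
    Nat.card {x : M // x ∈ t ∧ x ∉ s}
      = Fintype.card K ^ finrank K t - Fintype.card K ^ finrank K s := by
  have : Finite M := Module.finite_of_finite K
  have h1 : Nat.card {x : M // x ∈ t ∧ x ∉ s} = ((t : Set M) \ (s : Set M)).ncard := by
    rw [← Nat.card_coe_set_eq]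
    rfl
  rw [h1, Set.ncard_diff h]
  have h2 : (t : Set M).ncard = Nat.card t := by rw [← Nat.card_coe_set_eq]; rfl
  have h3 : (s : Set M).ncard = Nat.card s := by rw [← Nat.card_coe_set_eq]; rfl
  rw [h2, h3, card_submodule, card_submodule]

lemma card_nonzero (t : Submodule K M) :
    Nat.card {x : M // x ∈ t ∧ x ≠ 0} = Fintype.card K ^ finrank K t - 1 := by
  have : Finite M := Module.finite_of_finite K
  have h1 : Nat.card {x : M // x ∈ t ∧ x ≠ 0} = ((t : Set M) \ {0}).ncard := by
    rw [← Nat.card_coe_set_eq]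
    apply Nat.card_congr
    apply Equiv.subtypeEquivRight
    intro x
    simp [Set.mem_diff]
  rw [h1, Set.ncard_diff_singleton_of_mem t.zero_mem]
  have h2 : (t : Set M).ncard = Nat.card t := by rw [← Nat.card_coe_set_eq]; rfl
  rw [h2, card_submodule]

lemma card_pair [Fintype M] (P : M → M → Prop) :
    Nat.card {p : M × M // P p.1 p.2} = ∑ u : M, Nat.card {v : M // P u v} := by
  classical
  rw [Nat.card_eq_fintype_card, Fintype.card_congr (Equiv.subtypeProdEquivSigmaSubtype P),
    Fintype.card_sigma]
  congr 1
  ext u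
  rw [Nat.card_eq_fintype_card]

end Count

section Count2
variable {K : Type*} [Field K] [Fintype K] {M : Type*} [AddCommGroup M] [Module K M]
  [FiniteDimensional K M]

local notation "q" => Fintype.card K
variable [DecidableEq M] [DecidableEq (M →ₗ[K] K)]

lemma finrank_ker_functional (f : M →ₗ[K] K) (hf : f ≠ 0) :
    finrank K (LinearMap.ker f) + 1 = finrank K M := by
  obtain ⟨c, hc⟩ : ∃ c, f c ≠ 0 := by
    by_contra h
    push_neg at h
    exact hf (LinearMap.ext h)
  have hrange : LinearMap.range f = ⊤ := by
    rw [Submodule.eq_top_iff']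
    intro a
    refine ⟨(a / f c) • c, ?_⟩
    simp only [map_smul, smul_eq_mul]
    field_simp
  have h := LinearMap.finrank_range_add_finrank_ker f
  rw [hrange, finrank_top, finrank_self] at h
  omega

/-- The per-`u` count for the outer double count. -/
lemma card_fiber_u (B : M →ₗ[K] M →ₗ[K] K) (halt : ∀ v, B v v = 0) (u : M) :
    Nat.card {v : M // (u ≠ 0 ∧ v ∉ Submodule.span K {u}) ∧ B u v = 0}
      = if B u = 0 then (if u = 0 then 0 else q ^ finrank K M - q)
        else q ^ (finrank K M - 1) - q := by
  by_cases hu : u = 0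
  · subst hu
    rw [if_pos (map_zero B), if_pos rfl]
    have : IsEmpty {v : M // ((0 : M) ≠ 0 ∧ v ∉ Submodule.span K {(0 : M)}) ∧ B 0 v = 0} := by
      refine ⟨fun x => ?_⟩
      exact x.2.1.1 rfl
    exact Nat.card_of_isEmpty
  · have hspanle : Submodule.span K {u} ≤ LinearMap.ker (B u) := by
      rw [Submodule.span_singleton_le_iff_mem, LinearMap.mem_ker]
      exact halt u
    have hfr : finrank K (Submodule.span K ({u} : Set M)) = 1 := finrank_span_singleton hu
    by_cases hBu : B u = 0
    · rw [if_pos hBu, if_neg hu]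
      have he : Nat.card {v : M // (u ≠ 0 ∧ v ∉ Submodule.span K {u}) ∧ B u v = 0}
          = Nat.card {v : M // v ∈ (⊤ : Submodule K M) ∧ v ∉ Submodule.span K {u}} := by
        apply Nat.card_congr
        apply Equiv.subtypeEquivRight
        intro v
        simp [hu, hBu]
      rw [he, card_diff _ _ le_top, finrank_top, hfr, pow_one]
    · rw [if_neg hBu]
      have he : Nat.card {v : M // (u ≠ 0 ∧ v ∉ Submodule.span K {u}) ∧ B u v = 0}
          = Nat.card {v : M // v ∈ LinearMap.ker (B u) ∧ v ∉ Submodule.span K {u}} := by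
        apply Nat.card_congr
        apply Equiv.subtypeEquivRight
        intro v
        simp only [LinearMap.mem_ker]
        tauto
      rw [he, card_diff _ _ hspanle, hfr, pow_one]
      have hk := finrank_ker_functional (B u) hBu
      congr 2
      omega

end Count2

section Count3
variable {K : Type*} [Field K] [Fintype K] {M : Type*} [AddCommGroup M] [Module K M]
  [FiniteDimensional K M]

local notation "q" => Fintype.card K

lemma count_pairs [Fintype M] [DecidableEq M] [DecidableEq (M →ₗ[K] K)]
    (B : M →ₗ[K] M →ₗ[K] K) (halt : ∀ v, B v v = 0) :
    Nat.card {p : M × M // (p.1 ≠ 0 ∧ p.2 ∉ Submodule.span K {p.1}) ∧ B p.1 p.2 = 0}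
      = (q ^ finrank K (LinearMap.ker B) - 1) * (q ^ finrank K M - q)
        + (q ^ finrank K M - q ^ finrank K (LinearMap.ker B)) * (q ^ (finrank K M - 1) - q) := by
  classical
  set m := finrank K M with hm
  set k := finrank K (LinearMap.ker B) with hk
  rw [card_pair (fun u v => (u ≠ 0 ∧ v ∉ Submodule.span K {u}) ∧ B u v = 0)]
  have hval : ∀ u : M,
      Nat.card {v : M // (u ≠ 0 ∧ v ∉ Submodule.span K {u}) ∧ B u v = 0}
        = if B u = 0 then (if u = 0 then 0 else q ^ m - q) else q ^ (m - 1) - q :=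
    fun u => by rw [card_fiber_u B halt u]
  rw [Finset.sum_congr rfl (fun u _ => hval u)]
  rw [← Finset.sum_filter_add_sum_filter_not Finset.univ (fun u => B u = 0)]
  have hsker : (Finset.univ.filter (fun u => B u = 0)).card = q ^ k := by
    rw [← Fintype.card_subtype]
    have : Nat.card {x : M // B x = 0} = q ^ k := by
      rw [hk]
      exact card_submodule (LinearMap.ker B)
    rw [← Nat.card_eq_fintype_card, this]
  have hcardV : Fintype.card M = q ^ m := by
    rw [hm]; exact card_eq_pow_finrank
  have hzmem : (0 : M) ∈ Finset.univ.filter (fun u => B u = 0) := by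
    simp [map_zero]
  have hsum1 : (∑ u ∈ Finset.univ.filter (fun u => B u = 0),
      if u = 0 then 0 else q ^ m - q) = (q ^ k - 1) * (q ^ m - q) := by
    rw [← Finset.insert_erase hzmem, Finset.sum_insert (Finset.notMem_erase _ _), if_pos rfl,
      zero_add]
    rw [Finset.sum_congr rfl (fun u hu => if_neg (Finset.ne_of_mem_erase hu))]
    rw [Finset.sum_const, Finset.card_erase_of_mem hzmem, hsker, smul_eq_mul]
  have hsum2 : (∑ u ∈ Finset.univ.filter (fun u => ¬ B u = 0),
      if B u = 0 then (if u = 0 then 0 else q ^ m - q) else q ^ (m - 1) - q)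
        = (q ^ m - q ^ k) * (q ^ (m - 1) - q) := by
    rw [Finset.sum_congr rfl (fun u hu => if_neg (Finset.mem_filter.mp hu).2)]
    rw [Finset.sum_const, smul_eq_mul]
    congr 1
    have := Finset.card_filter_add_card_filter_not (s := Finset.univ)
      (fun u : M => B u = 0)
    rw [Finset.card_univ, hcardV, hsker] at this
    omega
  rw [hsum2, ← hsum1]
  congr 1
  apply Finset.sum_congr rfl
  intro u hu
  rw [if_pos (Finset.mem_filter.mp hu).2]

end Count3
section Count4
variable {K : Type*} [Field K] [Fintype K] {M : Type*} [AddCommGroup M] [Module K M]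
  [FiniteDimensional K M]

local notation "q" => Fintype.card K

lemma finrank_span_pair {u v : M} (hu : u ≠ 0) (hv : v ∉ Submodule.span K {u}) :
    finrank K (Submodule.span K ({u, v} : Set M)) = 2 := by
  have hind : LinearIndependent K ![v, u] := by
    rw [linearIndependent_fin2]
    constructor
    · exact hu
    · intro a ha
      exact hv (by rw [Submodule.mem_span_singleton]; exact ⟨a, by simpa using ha⟩)
  have h := finrank_span_eq_card hind
  rw [show Set.range ![v, u] = {v, u} from by rw [range_fin2]; rfl] at h
  rw [Set.pair_comm u v]
  simpa using h

lemma card_pairs_in_L (L : Submodule K M) (hL : finrank K L = 2) [Fintype M] :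
    Nat.card {p : M × M // (p.1 ∈ L ∧ p.1 ≠ 0) ∧ (p.2 ∈ L ∧ p.2 ∉ Submodule.span K {p.1})}
      = (q ^ 2 - 1) * (q ^ 2 - q) := by
  classical
  rw [card_pair (fun u v => (u ∈ L ∧ u ≠ 0) ∧ (v ∈ L ∧ v ∉ Submodule.span K {u}))]
  have hval : ∀ u : M,
      Nat.card {v : M // (u ∈ L ∧ u ≠ 0) ∧ (v ∈ L ∧ v ∉ Submodule.span K {u})}
        = if u ∈ L ∧ u ≠ 0 then q ^ 2 - q else 0 := by
    intro u
    by_cases hu : u ∈ L ∧ u ≠ 0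
    · rw [if_pos hu]
      have he : Nat.card {v : M // (u ∈ L ∧ u ≠ 0) ∧ (v ∈ L ∧ v ∉ Submodule.span K {u})}
          = Nat.card {v : M // v ∈ L ∧ v ∉ Submodule.span K {u}} := by
        apply Nat.card_congr
        apply Equiv.subtypeEquivRight
        intro v
        tauto
      rw [he, card_diff _ _ ((Submodule.span_singleton_le_iff_mem u L).mpr hu.1), hL,
        finrank_span_singleton hu.2, pow_one]
    · rw [if_neg hu]
      have : IsEmpty {v : M // (u ∈ L ∧ u ≠ 0) ∧ (v ∈ L ∧ v ∉ Submodule.span K {u})} :=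
        ⟨fun x => hu x.2.1⟩
      exact Nat.card_of_isEmpty
  rw [Finset.sum_congr rfl (fun u _ => hval u), Finset.sum_ite, Finset.sum_const,
    Finset.sum_const_zero, add_zero, smul_eq_mul]
  congr 1
  rw [← Fintype.card_subtype, ← Nat.card_eq_fintype_card]
  rw [card_nonzero L, hL]

lemma count_main [Fintype M] (B : M →ₗ[K] M →ₗ[K] K) (halt : ∀ v, B v v = 0) :
    Nat.card {L : Submodule K M // finrank K L = 2 ∧ ∀ x ∈ L, ∀ y ∈ L, B x y = 0}
        * ((q ^ 2 - 1) * (q ^ 2 - q))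
      = Nat.card {p : M × M // (p.1 ≠ 0 ∧ p.2 ∉ Submodule.span K {p.1}) ∧ B p.1 p.2 = 0} := by
  classical
  have : Finite (Submodule K M) :=
    Finite.of_injective (fun L => (L : Set M)) SetLike.coe_injective
  have : Fintype {L : Submodule K M // finrank K L = 2 ∧ ∀ x ∈ L, ∀ y ∈ L, B x y = 0} :=
    Fintype.ofFinite _
  set T := {L : Submodule K M // finrank K L = 2 ∧ ∀ x ∈ L, ∀ y ∈ L, B x y = 0} with hT
  set C : M × M → Prop := fun p => (p.1 ≠ 0 ∧ p.2 ∉ Submodule.span K {p.1}) ∧ B p.1 p.2 = 0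
    with hC
  have hfr : ∀ p : {p : M × M // C p},
      finrank K (Submodule.span K ({p.1.1, p.1.2} : Set M)) = 2 :=
    fun p => finrank_span_pair p.2.1.1 p.2.1.2
  have hiso : ∀ p : {p : M × M // C p}, ∀ x ∈ Submodule.span K ({p.1.1, p.1.2} : Set M),
      ∀ y ∈ Submodule.span K ({p.1.1, p.1.2} : Set M), B x y = 0 :=
    fun p => isotropic_span_pair B halt p.2.2
  set f : {p : M × M // C p} → T :=
    fun p => ⟨Submodule.span K ({p.1.1, p.1.2} : Set M), hfr p, hiso p⟩ with hf
  have hcardeq : Nat.card {p : M × M // C p} = ∑ L : T, Fintype.card {p // f p = L} := by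
    rw [Nat.card_eq_fintype_card, Fintype.card_congr (Equiv.sigmaFiberEquiv f).symm,
      Fintype.card_sigma]
  have hfiber : ∀ L : T, Fintype.card {p // f p = L} = (q ^ 2 - 1) * (q ^ 2 - q) := by
    intro L
    rw [← Nat.card_eq_fintype_card, ← card_pairs_in_L L.1 L.2.1]
    apply Nat.card_congr
    refine ⟨fun p => ⟨p.1.1, ?_⟩, fun p => ⟨⟨p.1, ?_⟩, ?_⟩, ?_, ?_⟩
    · -- forward membership conditions
      obtain ⟨⟨pp, hCp⟩, hfp⟩ := p
      have hsp : Submodule.span K ({pp.1, pp.2} : Set M) = (L : Submodule K M) :=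
        congrArg Subtype.val hfp
      refine ⟨⟨?_, hCp.1.1⟩, ?_, hCp.1.2⟩
      · rw [← hsp]; exact Submodule.subset_span (by simp)
      · rw [← hsp]; exact Submodule.subset_span (by simp)
    · -- C p holds
      exact ⟨⟨p.2.1.2, p.2.2.2⟩, L.2.2 p.1.1 p.2.1.1 p.1.2 p.2.2.1⟩
    · -- f p = L
      apply Subtype.ext
      show Submodule.span K ({p.1.1, p.1.2} : Set M) = (L : Submodule K M)
      apply Submodule.eq_of_le_of_finrank_eq
      · rw [Submodule.span_le]
        intro z hz
        rcases hz with rfl | hz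
        · exact p.2.1.1
        · rw [Set.mem_singleton_iff] at hz
          subst hz
          exact p.2.2.1
      · rw [finrank_span_pair p.2.1.2 p.2.2.2, L.2.1]
    · intro p
      apply Subtype.ext
      apply Subtype.ext
      rfl
    · intro p
      rfl
  rw [hcardeq, Finset.sum_congr rfl (fun L _ => hfiber L), Finset.sum_const, smul_eq_mul,
    Finset.card_univ, Nat.card_eq_fintype_card]

end Count4

-- T j = (Q^j - 1)*(Q^m - Q) + (Q^m - Q^j)*(Q^(m-1) - Q)
noncomputable def Tnum (Q : ℚ) (m j : ℕ) : ℚ :=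
  (Q ^ j - 1) * (Q ^ m - Q) + (Q ^ m - Q ^ j) * (Q ^ (m - 1) - Q)

lemma qfacts {q : ℕ} (hq : 2 ≤ q) :
    (1:ℚ) < (q:ℚ) ∧ ((q:ℚ) - 1 ≠ 0) ∧ ((q:ℚ) ≠ 0) ∧ ((q:ℚ) + 1 ≠ 0) ∧ ((q:ℚ)^2 - 1 ≠ 0) := by
  have h1 : (1:ℚ) < (q:ℚ) := by exact_mod_cast hq.trans_lt' one_lt_two
  refine ⟨h1, by nlinarith, by nlinarith, by nlinarith, by nlinarith⟩

lemma claimA {q m' : ℕ} (hq : 2 ≤ q) :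
    Tnum (q:ℚ) (m' + 4) (m' + 2) / (((q:ℚ)^2 - 1) * ((q:ℚ)^2 - (q:ℚ)))
      = eG q 2 (m' + 4) := by
  obtain ⟨h1, h2, h3, h4, h5⟩ := qfacts hq
  set Q := (q:ℚ)
  have e1 : eG q 2 (m' + 4)
      = ((Q ^ (m' + 4) - 1) / (Q - 1)) * ((Q ^ (m' + 3) - 1) / (Q ^ 2 - 1))
        - Q ^ (2 * m' + 4) := by
    rw [eG, gaussBinom]
    rw [Finset.prod_range_succ, Finset.prod_range_succ, Finset.prod_range_zero, one_mul]
    norm_num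
    rw [show 2 * (m' + 4 - 2) = 2 * m' + 4 from by omega]
  rw [e1, Tnum]
  rw [show m' + 4 - 1 = m' + 3 from by omega]
  have hD : (Q^2 - 1) * (Q^2 - Q) ≠ 0 := by
    apply mul_ne_zero h5
    have : Q^2 - Q = Q * (Q - 1) := by ring
    rw [this]; exact mul_ne_zero h3 h2
  field_simp
  ring

lemma claimB {q m' : ℕ} (hq : 2 ≤ q) :
    Tnum (q:ℚ) (m' + 4) m' / (((q:ℚ)^2 - 1) * ((q:ℚ)^2 - (q:ℚ)))
      = eG' q 2 (m' + 4) := by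
  obtain ⟨h1, h2, h3, h4, h5⟩ := qfacts hq
  set Q := (q:ℚ)
  have e1 : eG' q 2 (m' + 4)
      = ((Q ^ (m' + 4) - 1) / (Q - 1)) * ((Q ^ (m' + 3) - 1) / (Q ^ 2 - 1))
        - Q ^ (2 * m' + 4) - Q ^ (2 * m' + 2) := by
    rw [eG', gaussBinom]
    rw [Finset.prod_range_succ, Finset.prod_range_succ, Finset.prod_range_zero, one_mul]
    norm_num
    rw [show 2 * (m' + 4 - 2) - 2 = 2 * m' + 2 from by omega,
      show 2 * (m' + 4 - 2) = 2 * m' + 4 from by omega]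
  rw [e1, Tnum]
  rw [show m' + 4 - 1 = m' + 3 from by omega]
  have hD : (Q^2 - 1) * (Q^2 - Q) ≠ 0 := by
    apply mul_ne_zero h5
    have he : Q^2 - Q = Q * (Q - 1) := by ring
    rw [he]; exact mul_ne_zero h3 h2
  rw [div_eq_iff hD]
  field_simp
  ring

lemma hDpos {q : ℕ} (hq : 2 ≤ q) : 0 < ((q:ℚ)^2 - 1) * ((q:ℚ)^2 - (q:ℚ)) := by
  obtain ⟨h1, _, _, _, _⟩ := qfacts hq
  have : 0 < (q:ℚ)^2 - 1 := by nlinarith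
  have : 0 < (q:ℚ)^2 - (q:ℚ) := by nlinarith
  nlinarith

lemma final_ineq {q m' k N : ℕ} (hq : 2 ≤ q) (hk : k ≤ m')
    (hNeq : (N:ℚ) * (((q:ℚ)^2 - 1) * ((q:ℚ)^2 - (q:ℚ))) = Tnum (q:ℚ) (m'+4) k) :
    (N:ℚ) ≤ eG' q 2 (m' + 4) := by
  obtain ⟨h1, _, _, _, _⟩ := qfacts hq
  have hD := hDpos hq
  rw [← claimB hq]
  have hNval : (N:ℚ) = Tnum (q:ℚ) (m'+4) k / (((q:ℚ)^2 - 1) * ((q:ℚ)^2 - (q:ℚ))) :=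
    (eq_div_iff hD.ne').mpr hNeq
  rw [hNval, div_le_div_iff_of_pos_right hD]
  rw [Tnum, Tnum]
  have hQ1 : (1:ℚ) ≤ (q:ℚ) := h1.le
  have hpk : (q:ℚ) ^ k ≤ (q:ℚ) ^ m' := pow_le_pow_right₀ hQ1 hk
  have hQm : (q:ℚ) ^ (m' + 4 - 1) ≤ (q:ℚ) ^ (m' + 4) :=
    pow_le_pow_right₀ hQ1 (by omega)
  nlinarith [mul_nonneg (sub_nonneg.2 hpk) (sub_nonneg.2 hQm)]

lemma eq_case {q m' N : ℕ} (hq : 2 ≤ q)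
    (hNeq : (N:ℚ) * (((q:ℚ)^2 - 1) * ((q:ℚ)^2 - (q:ℚ))) = Tnum (q:ℚ) (m'+4) (m'+2)) :
    (N:ℚ) = eG q 2 (m' + 4) := by
  have hD := hDpos hq
  rw [← claimA hq]
  exact (eq_div_iff hD.ne').mpr hNeq

lemma cast_count {q m k N : ℕ} (hq : 2 ≤ q) (hm : 2 ≤ m) (hk : k ≤ m)
    (hN : N * ((q^2 - 1) * (q^2 - q))
      = (q^k - 1) * (q^m - q) + (q^m - q^k) * (q^(m-1) - q)) :
    (N:ℚ) * (((q:ℚ)^2 - 1) * ((q:ℚ)^2 - (q:ℚ))) = Tnum (q:ℚ) m k := by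
  have hq1 : 1 ≤ q := by omega
  have c1 : 1 ≤ q ^ 2 := Nat.one_le_pow _ _ (by omega)
  have c2 : q ≤ q ^ 2 := by calc q = q ^ 1 := (pow_one q).symm
                                _ ≤ q ^ 2 := Nat.pow_le_pow_right hq1 (by omega)
  have c3 : 1 ≤ q ^ k := Nat.one_le_pow _ _ (by omega)
  have c4 : q ≤ q ^ m := by calc q = q ^ 1 := (pow_one q).symm
                                _ ≤ q ^ m := Nat.pow_le_pow_right hq1 (by omega)
  have c5 : q ^ k ≤ q ^ m := Nat.pow_le_pow_right hq1 hk
  have c6 : q ≤ q ^ (m - 1) := by calc q = q ^ 1 := (pow_one q).symm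
                                _ ≤ q ^ (m-1) := Nat.pow_le_pow_right hq1 (by omega)
  have h := congrArg (fun n : ℕ => (n : ℚ)) hN
  push_cast [Nat.cast_sub c1, Nat.cast_sub c2, Nat.cast_sub c3, Nat.cast_sub c4,
    Nat.cast_sub c5, Nat.cast_sub c6] at h
  rw [Tnum]
  exact_mod_cast h


section AuxLies
variable (F : Type*) [Field F] (V : Type*) [AddCommGroup V] [Module F V]
variable [FiniteDimensional F V]

lemma liesOn_iff (φ : ⋀[F]^2 V →ₗ[F] F) (L : Submodule F V) (hL : finrank F L = 2) :
    LiesOn F V 2 φ L ↔ ∀ x ∈ L, ∀ y ∈ L, bil F V φ x y = 0 := by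
  constructor
  · rintro ⟨ω, hmem, hind, hspan, hval⟩ x hx y hy
    rw [bil_wedge] at hval
    rw [range_fin2] at hspan
    exact isotropic_span_pair (bil F V φ) (bil_alt F V φ) hval x (hspan ▸ hx) y (hspan ▸ hy)
  · intro hiso
    set b : Basis (Fin 2) F L := (finBasis F L).reindex (finCongr hL) with hb
    refine ⟨fun i => (b i : V), fun i => (b i).2, ?_, ?_, ?_⟩
    · exact b.linearIndependent.map' L.subtype L.ker_subtype
    · have : Set.range (fun i => ((b i : L) : V)) = L.subtype '' (Set.range b) := by
        rw [← Set.range_comp]; rfl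
      rw [this, ← Submodule.map_span, b.span_eq, Submodule.map_top, Submodule.range_subtype]
    · rw [bil_wedge]
      exact hiso _ (b 0).2 _ (b 1).2

omit [FiniteDimensional F V] in
lemma wedge_span : Submodule.span F (Set.range (wedge F V 2)) = ⊤ := by
  apply Submodule.map_injective_of_injective (Submodule.injective_subtype (⋀[F]^2 V))
  rw [Submodule.map_span, Submodule.map_top, Submodule.range_subtype, ← Set.range_comp]
  have h : (⋀[F]^2 V).subtype ∘ wedge F V 2 = ExteriorAlgebra.ιMulti F 2 := rfl
  rw [h, ExteriorAlgebra.ιMulti_span_fixedDegree]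

lemma bil_ne_zero (φ : ⋀[F]^2 V →ₗ[F] F) (hφ : φ ≠ 0) : bil F V φ ≠ 0 := by
  intro hB
  apply hφ
  refine LinearMap.ext fun x => ?_
  simp only [LinearMap.zero_apply]
  have hx : x ∈ Submodule.span F (Set.range (wedge F V 2)) := by
    rw [wedge_span]; exact Submodule.mem_top
  refine Submodule.span_induction ?_ ?_ ?_ ?_ hx
  · rintro _ ⟨v, rfl⟩
    rw [bil_wedge, hB]
    rfl
  · exact map_zero φ
  · intro a b _ _ ha hb
    rw [map_add, ha, hb, add_zero]
  · intro a x _ hx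
    rw [map_smul, hx, smul_zero]

end AuxLies

/-- **Second minimum weight for `ℓ = 2`.** If `m ≥ 4` and `Π` is a hyperplane of the Plücker
projective space `P(⋀^2 V)` with `|Π ∩ G(2,V)| < e(2,m)`, then
`|Π ∩ G(2,V)| ≤ e'(2,m) = [m 2]_q − q^{2(m−2)} − q^{2(m−2)−2}`. -/
theorem stmt4 (F : Type*) [Field F] [Fintype F] (V : Type*) [AddCommGroup V] [Module F V]
    [FiniteDimensional F V] (q m : ℕ) (hq : Fintype.card F = q)
    (hV : finrank F V = m) (hm : 4 ≤ m)
    (φ : ⋀[F]^2 V →ₗ[F] F) (hφ : φ ≠ 0)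
    (hlt : (Nat.card {L : Submodule F V | finrank F L = 2 ∧ LiesOn F V 2 φ L} : ℚ) <
      eG q 2 m) :
    (Nat.card {L : Submodule F V | finrank F L = 2 ∧ LiesOn F V 2 φ L} : ℚ) ≤
      eG' q 2 m := by
  classical
  have hFinV : Finite V := Module.finite_of_finite F
  letI : Fintype V := Fintype.ofFinite V
  set B := bil F V φ with hBdef
  have halt : ∀ v, B v v = 0 := bil_alt F V φ
  have hBne : B ≠ 0 := bil_ne_zero F V φ hφ
  have hsetcong : Nat.card {L : Submodule F V | finrank F L = 2 ∧ LiesOn F V 2 φ L}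
      = Nat.card {L : Submodule F V // finrank F L = 2 ∧ ∀ x ∈ L, ∀ y ∈ L, B x y = 0} := by
    apply Nat.card_congr
    apply Equiv.subtypeEquivRight
    intro L
    simp only [Set.mem_setOf_eq]
    constructor
    · rintro ⟨h2, hlo⟩
      exact ⟨h2, (liesOn_iff F V φ L h2).mp hlo⟩
    · rintro ⟨h2, hiso⟩
      exact ⟨h2, (liesOn_iff F V φ L h2).mpr hiso⟩
  rw [hsetcong] at hlt ⊢
  set N := Nat.card {L : Submodule F V // finrank F L = 2 ∧ ∀ x ∈ L, ∀ y ∈ L, B x y = 0}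
    with hNdef
  have hq2 : 2 ≤ q := by rw [← hq]; exact Fintype.one_lt_card
  set k := finrank F (LinearMap.ker B) with hkdef
  have hkm : k ≤ m := by rw [← hV]; exact Submodule.finrank_le _
  have hkne : k ≠ m := by
    intro hkm'
    apply hBne
    rw [← LinearMap.ker_eq_top]
    apply Submodule.eq_top_of_finrank_eq
    rw [hV]
    exact hkm'
  have heven : Even (m - k) := by
    rw [← hV]
    exact even_corank (finrank F V) V le_rfl B halt
  have hcnt : N * ((q ^ 2 - 1) * (q ^ 2 - q))
      = (q ^ k - 1) * (q ^ m - q) + (q ^ m - q ^ k) * (q ^ (m - 1) - q) := by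
    have h1 := count_main B halt
    have h2 := count_pairs B halt
    rw [hq] at h1 h2
    rw [hV, ← hkdef] at h2
    exact h1.trans h2
  obtain ⟨m', rfl⟩ : ∃ m', m = m' + 4 := ⟨m - 4, by omega⟩
  have hQeq := cast_count hq2 (by omega) hkm hcnt
  by_cases hkeq : k = m' + 2
  · exfalso
    rw [hkeq] at hQeq
    rw [eq_case hq2 hQeq] at hlt
    exact lt_irrefl _ hlt
  · have hk4 : k ≤ m' := by
      obtain ⟨t, ht⟩ := heven
      omega
    exact final_ineq hq2 hk4 hQeq
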